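/- arXiv:1305.2679 — 7 statements merged into one kernel-verified Lean document; each statement's English description precedes it below -/
import Mathlib

section
/- In a finite digraph, if a vertex v belongs to a strongly connected component S with at least two vertices, and one removes all outgoing arcs of a single chosen vertex w in S (pruning), then in the resulting digraph every vertex of S is grounded, i.e., is a leaf vertex or has a directed path to a leaf vertex. -/
/-- A leaf vertex: no outgoing arcs. -/
def IsLeaf {V : Type*} (A : V → V → Prop) (v : V) : Prop := ∀ w, ¬ A v w

/-- A vertex is grounded if it is a leaf or has a directed path to some leaf. -/
def Grounded {V : Type*} (A : V → V → Prop) (v : V) : Prop :=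
  IsLeaf A v ∨ ∃ w, IsLeaf A w ∧ Relation.TransGen A v w

/-- A strongly connected component: a nonempty set of pairwise mutually reachable
vertices that is maximal with this property. -/
def IsSCC {V : Type*} (A : V → V → Prop) (S : Set V) : Prop :=
  S.Nonempty ∧ (∀ i ∈ S, ∀ j ∈ S, Relation.ReflTransGen A i j) ∧
    ∀ v, (∃ i ∈ S, Relation.ReflTransGen A i v ∧ Relation.ReflTransGen A v i) → v ∈ S

/-- A leaf SCC: an SCC with at least two vertices and no arc leaving it. -/
def IsLeafSCC {V : Type*} (A : V → V → Prop) (S : Set V) : Prop :=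
  IsSCC A S ∧ (∃ i ∈ S, ∃ j ∈ S, i ≠ j) ∧ ∀ i ∈ S, ∀ j, A i j → j ∈ S

private lemma prune_path {V : Type*} (A : V → V → Prop) (w : V) :
    ∀ u, Relation.ReflTransGen A u w → u ≠ w →
      Relation.TransGen (fun a b => A a b ∧ a ≠ w) u w := by
  intro u h
  induction h using Relation.ReflTransGen.head_induction_on with
  | refl => exact fun h => absurd rfl h
  | head hab hbw ih =>
    intro huw
    rename_i a b
    by_cases hb : b = w
    · subst hb; exact Relation.TransGen.single ⟨hab, huw⟩
    · exact (ih hb).head ⟨hab, huw⟩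

/-- Pruning an SCC with at least two vertices (removing all outgoing
arcs of one chosen vertex `w` of the SCC) grounds every vertex of the SCC. -/
theorem prune_scc_grounds {V : Type*} [Fintype V] (A : V → V → Prop)
    (S : Set V) (hS : IsSCC A S) (hcard : ∃ i ∈ S, ∃ j ∈ S, i ≠ j)
    (w : V) (hw : w ∈ S) :
    ∀ u ∈ S, Grounded (fun a b => A a b ∧ a ≠ w) u := by
  intro u hu
  have hleaf : IsLeaf (fun a b => A a b ∧ a ≠ w) w := fun x h => h.2 rfl
  by_cases huw : u = w
  · subst huw; exact Or.inl hleaf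
  · exact Or.inr ⟨w, hleaf, prune_path A w u (hS.2.1 u hu w hw) huw⟩
end

section
/- In a finite digraph, if an arc is added from a vertex v of a leaf SCC S to a leaf vertex u outside S, then in the resulting digraph every vertex of S is grounded, and S is no longer a leaf SCC. -/
/-- Adding an arc from a vertex `v` of a leaf SCC `S` to a leaf vertex
`u` outside `S` grounds every vertex of `S`, and `S` is no longer a leaf SCC. -/
theorem append_arc_to_leaf_grounds {V : Type*} [Fintype V] (A : V → V → Prop)
    (S : Set V) (hS : IsLeafSCC A S) (v : V) (hv : v ∈ S)
    (u : V) (hu : u ∉ S) (huleaf : IsLeaf A u) :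
    (∀ s ∈ S, Grounded (fun a b => A a b ∨ (a = v ∧ b = u)) s) ∧
      ¬ IsLeafSCC (fun a b => A a b ∨ (a = v ∧ b = u)) S := by
  have huv : u ≠ v := fun h => hu (h ▸ hv)
  have huleaf' : IsLeaf (fun a b => A a b ∨ (a = v ∧ b = u)) u := by
    intro w hw
    rcases hw with h | ⟨h, _⟩
    · exact huleaf w h
    · exact huv h
  constructor
  · intro s hs
    right
    refine ⟨u, huleaf', ?_⟩
    have hsv : Relation.ReflTransGen A s v := hS.1.2.1 s hs v hv
    have hsv' : Relation.ReflTransGen (fun a b => A a b ∨ (a = v ∧ b = u)) s v :=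
      Relation.ReflTransGen.mono (p := fun a b => A a b ∨ (a = v ∧ b = u)) (fun a b h => Or.inl h) s v hsv
    exact Relation.TransGen.tail' hsv' (Or.inr ⟨rfl, rfl⟩)
  · intro h
    exact hu (h.2.2 v hv u (Or.inr ⟨rfl, rfl⟩))
end

section
/- Any uniprior multicast index code allows every receiver to decode the messages of all its predecessors: if there is a directed path from vertex j to vertex i in the information-flow digraph G, then receiver i can determine message x_j as a function of the codeword and its prior message x_i. Formally, for any encoding function E on the messages and decoding functions satisfying that each receiver i can recover x_k for every arc (k → i), receiver i can also recover x_j for every predecessor j of i. -/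
/-- For any valid uniprior multicast index code (encoder `E`, with a
decoder for every arc `(k → i)` recovering `x k` from the codeword and the prior
`x i`), every receiver `i` can also recover the message of every predecessor `j`. -/
theorem decode_predecessors {n : ℕ} {C : Type*} (A : Fin n → Fin n → Prop)
    (E : (Fin n → Bool) → C)
    (hdec : ∀ k i : Fin n, A k i →
      ∃ D : C → Bool → Bool, ∀ x : Fin n → Bool, D (E x) (x i) = x k)
    (i j : Fin n) (hpred : Relation.TransGen A j i) :
    ∃ f : C → Bool → Bool, ∀ x : Fin n → Bool, f (E x) (x i) = x j := by
  induction hpred with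
  | single h => exact hdec j _ h
  | tail _ hbi ih =>
    obtain ⟨f, hf⟩ := ih
    obtain ⟨D, hD⟩ := hdec _ _ hbi
    exact ⟨fun c b => f c (D c b), fun x => by show f (E x) (D (E x) (x _)) = x j; rw [hD, hf]⟩
end

section
/- The optimal uniprior multicast index codelength is at least the number of non-leaf vertices in any grounded digraph obtained by reducing the decoding requirements: if G† is a grounded digraph on the vertices (every vertex is a leaf or has a path to a leaf, leaves have empty messages), then any valid index code for G† has length at least V_out(G†) bits, where V_out(G†) is the number of vertices with at least one outgoing arc. -/
/-- Lower bound from a grounded digraph: if `G†` is grounded (every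
vertex is a leaf or has a path to a leaf), leaves carry empty messages (the
encoder depends only on non-leaf messages), and there is a valid index code of
length `L`, then `L ≥ V_out(G†)`, the number of non-leaf vertices. -/
theorem grounded_lower_bound {n L : ℕ} (A : Fin n → Fin n → Prop)
    (hground : ∀ v, Grounded A v)
    (E : (Fin n → Bool) → (Fin L → Bool))
    (hsimp : ∀ x x' : Fin n → Bool, (∀ v, ¬ IsLeaf A v → x v = x' v) → E x = E x')
    (hdec : ∀ j i : Fin n, A j i →
      ∃ D : (Fin L → Bool) → Bool → Bool, ∀ x : Fin n → Bool, D (E x) (x i) = x j) :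
    {v : Fin n | ¬ IsLeaf A v}.ncard ≤ L := by
  classical
  -- key: if codewords agree and leaf values agree, all values agree
  have key : ∀ x x' : Fin n → Bool, E x = E x' → (∀ v, IsLeaf A v → x v = x' v) →
      ∀ v, x v = x' v := by
    intro x x' hE hleaf v
    by_cases hv : IsLeaf A v
    · exact hleaf v hv
    · rcases hground v with h | ⟨w, hw, hpath⟩
      · exact absurd h hv
      · clear hv
        induction hpath using Relation.TransGen.head_induction_on with
        | single hab =>
          rcases hdec _ _ hab with ⟨D, hD⟩
          rw [← hD x, ← hD x', hE, hleaf w hw]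
        | head hab _ IH =>
          rcases hdec _ _ hab with ⟨D, hD⟩
          rw [← hD x, ← hD x', hE, IH]
  -- injective map from non-leaf assignments to codewords
  set S := {v : Fin n | ¬ IsLeaf A v}
  let ext : (S → Bool) → (Fin n → Bool) := fun c v =>
    if h : v ∈ S then c ⟨v, h⟩ else false
  have hinj : Function.Injective (fun c => E (ext c)) := by
    intro c c' h
    funext v
    have hall := key (ext c) (ext c') h (fun u hu => by
      simp only [ext]
      rw [dif_neg, dif_neg] <;> simp [S, hu]) v.1
    simpa only [ext, dif_pos v.2] using hall
  have hcard := Fintype.card_le_of_injective _ hinj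
  simp only [Fintype.card_fun, Fintype.card_bool, Fintype.card_fin] at hcard
  have : S.ncard = Fintype.card S := by
    rw [← Nat.card_coe_set_eq, Nat.card_eq_fintype_card]
  rw [this]
  exact (Nat.pow_le_pow_iff_right one_lt_two).mp hcard
end

section
/- For any index code for a multi-sender uniprior multicast problem, any receiver (indeed any party knowing only the codeword) can decode the messages of every message-disconnected leaf SCC. Formally: suppose the vertex set V is partitioned into nonempty V1 and V2 with no message-graph edge between V1 and V2, so the codeword splits as c = (c1, c2) where c1 depends only on messages indexed by V1 and c2 only on messages indexed by V2. If a,b are two vertices in a common SCC of the information-flow digraph with a ∈ V1, b ∈ V2, then x_b is a deterministic function of c2 alone (hence of c alone). -/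
/-- For any multi-sender index code whose codeword splits as
`c = (c1, c2)` with `c1` depending only on messages of `V1` and `c2` only on
messages of `V2` (a partition with no message edge across), if `a ∈ V1` and
`b ∈ V2` lie in a common SCC of the information-flow digraph, then `x b` is a
deterministic function of `c2` alone. -/
theorem message_disconnected_decodable {n : ℕ} {C1 C2 : Type*}
    (A : Fin n → Fin n → Prop)
    (V1 V2 : Set (Fin n)) (hpart : ∀ v, v ∈ V1 ↔ v ∉ V2)
    (hne1 : V1.Nonempty) (hne2 : V2.Nonempty)
    (E1 : (Fin n → Bool) → C1) (E2 : (Fin n → Bool) → C2)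
    (h1 : ∀ x x' : Fin n → Bool, (∀ v ∈ V1, x v = x' v) → E1 x = E1 x')
    (h2 : ∀ x x' : Fin n → Bool, (∀ v ∈ V2, x v = x' v) → E2 x = E2 x')
    (hdec : ∀ k i : Fin n, A k i →
      ∃ D : C1 → C2 → Bool → Bool, ∀ x : Fin n → Bool, D (E1 x) (E2 x) (x i) = x k)
    (a b : Fin n) (ha : a ∈ V1) (hb : b ∈ V2)
    (hscc : Relation.ReflTransGen A a b ∧ Relation.ReflTransGen A b a) :
    ∃ g : C2 → Bool, ∀ x : Fin n → Bool, g (E2 x) = x b := by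
  classical
  -- Step 1: along the walk b →* a, receiver a (knowing x a and the codeword)
  -- can decode x b.
  have key : ∀ k : Fin n, Relation.ReflTransGen A k a →
      ∃ F : C1 → C2 → Bool → Bool, ∀ x : Fin n → Bool, F (E1 x) (E2 x) (x a) = x k := by
    intro k hk
    induction hk using Relation.ReflTransGen.head_induction_on with
    | refl => exact ⟨fun _ _ t => t, fun _ => rfl⟩
    | head hstep _ ih =>
      obtain ⟨F, hF⟩ := ih
      obtain ⟨D, hD⟩ := hdec _ _ hstep
      exact ⟨fun c1 c2 t => D c1 c2 (F c1 c2 t), fun x => by dsimp only; rw [hF, hD]⟩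
  obtain ⟨F, hF⟩ := key b hscc.2
  -- Step 2: well-definedness of x b as function of E2 x.
  have wd : ∀ x x' : Fin n → Bool, E2 x = E2 x' → x b = x' b := by
    intro x x' he
    set y : Fin n → Bool := fun v => if v ∈ V2 then x v else x' v with hy
    have hE2y : E2 y = E2 x := h2 y x (fun v hv => by simp [hy, hv])
    have hE1y : E1 y = E1 x' := h1 y x' (fun v hv => by
      have : v ∉ V2 := (hpart v).1 hv
      simp [hy, this])
    have hyb : y b = x b := by simp [hy, hb]
    have hya : y a = x' a := by
      have : a ∉ V2 := (hpart a).1 ha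
      simp [hy, this]
    calc x b = y b := hyb.symm
      _ = F (E1 y) (E2 y) (y a) := (hF y).symm
      _ = F (E1 x') (E2 x') (x' a) := by rw [hE1y, hE2y, he, hya]
      _ = x' b := hF x'
  refine ⟨fun c => if h : ∃ x : Fin n → Bool, E2 x = c then h.choose b else false, ?_⟩
  intro x
  have h : ∃ x' : Fin n → Bool, E2 x' = E2 x := ⟨x, rfl⟩
  simp only [dif_pos h]
  exact wd h.choose x h.choose_spec
end

section
/- The pairwise-XOR coding scheme achieves codelength V_out(G) − (N_connected + N_tree): if the information-flow digraph G contains N_connected vertex-disjoint message-connected leaf SCCs and N_tree vertex-disjoint connecting trees (disjoint from the SCCs), then there is a valid multi-sender index code of total length V_out(G) − (N_connected + N_tree), where V_out(G) is the number of non-leaf vertices of G. -/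
open Classical

noncomputable section PXAux

variable {V : Type*}

/-- There is a path of length `k` from `v` to `r` along `R`. -/
def PXReach (R : V → V → Prop) (r : V) : ℕ → V → Prop
  | 0, v => v = r
  | (k+1), v => ∃ w, R v w ∧ PXReach R r k w

/-- Distance from `v` to `r` along `R` (0 if unreachable). -/
noncomputable def PXDist (R : V → V → Prop) (r : V) (v : V) : ℕ :=
  if h : ∃ k, PXReach R r k v then Nat.find h else 0

/-- A parent of `v` one step closer to `r` (or `v` itself). -/
noncomputable def PXPar (R : V → V → Prop) (r : V) (v : V) : V :=
  if h : ∃ w, R v w ∧ PXReach R r (PXDist R r v - 1) w then h.choose else v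

lemma pxreach_of_rtg {R : V → V → Prop} {r v : V}
    (h : Relation.ReflTransGen R v r) : ∃ k, PXReach R r k v := by
  induction h using Relation.ReflTransGen.head_induction_on with
  | refl => exact ⟨0, rfl⟩
  | head hab _ ih => obtain ⟨k, hk⟩ := ih; exact ⟨k + 1, _, hab, hk⟩

lemma pxpar_spec {R : V → V → Prop} {r v : V} (h : ∃ k, PXReach R r k v)
    (hvr : v ≠ r) :
    R v (PXPar R r v) ∧ (∃ k, PXReach R r k (PXPar R r v)) ∧
      PXDist R r (PXPar R r v) < PXDist R r v := by
  have hd : PXDist R r v = Nat.find h := dif_pos h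
  have hspec : PXReach R r (Nat.find h) v := Nat.find_spec h
  have hne : Nat.find h ≠ 0 := by
    intro h0
    rw [h0] at hspec
    exact hvr hspec
  obtain ⟨m, hm⟩ := Nat.exists_eq_succ_of_ne_zero hne
  rw [hm] at hspec
  obtain ⟨w, hw, hrw⟩ := hspec
  have hm' : PXDist R r v - 1 = m := by omega
  have hex : ∃ w, R v w ∧ PXReach R r (PXDist R r v - 1) w :=
    ⟨w, hw, by rw [hm']; exact hrw⟩
  have hpar : PXPar R r v = hex.choose := dif_pos hex
  obtain ⟨hw1, hw2⟩ := hex.choose_spec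
  rw [hpar]
  refine ⟨hw1, ⟨PXDist R r v - 1, hw2⟩, ?_⟩
  have hle : PXDist R r hex.choose ≤ PXDist R r v - 1 := by
    have hex2 : ∃ k, PXReach R r k hex.choose := ⟨_, hw2⟩
    rw [PXDist, dif_pos hex2]
    exact Nat.find_le hw2
  omega

lemma pxprop {R : V → V → Prop} {r : V} {y : V → Bool}
    (hy : ∀ v, (∃ k, PXReach R r k v) → v ≠ r → y v = y (PXPar R r v)) :
    ∀ v, (∃ k, PXReach R r k v) → y v = y r := by
  suffices H : ∀ m, ∀ v, (∃ k, PXReach R r k v) → PXDist R r v = m → y v = y r by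
    intro v hv; exact H _ v hv rfl
  intro m
  induction m using Nat.strong_induction_on with
  | _ m ih =>
    intro v hv hd
    by_cases hvr : v = r
    · rw [hvr]
    · obtain ⟨h1, h2, h3⟩ := pxpar_spec hv hvr
      rw [hy v hv hvr]
      exact ih _ (hd ▸ h3) _ h2 rfl

end PXAux



/-- A multi-sender uniprior multicast index code of total length `L` exists:
sender `s` (for `s : Fin nS`) encodes only the messages in `M s` into `ℓ s` bits,
and for every arc `(j → i)` receiver `i` can recover `x j` from the concatenated
codeword and its prior `x i`. -/
def Achievable {n nS : ℕ} (A : Fin n → Fin n → Prop) (M : Fin nS → Set (Fin n))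
    (L : ℕ) : Prop :=
  ∃ ℓ : Fin nS → ℕ, (∑ s, ℓ s) = L ∧
    ∃ E : (s : Fin nS) → (Fin n → Bool) → Fin (ℓ s) → Bool,
      (∀ s, ∀ x x' : Fin n → Bool, (∀ v ∈ M s, x v = x' v) → E s x = E s x') ∧
      ∀ j i : Fin n, A j i →
        ∃ D : ((s : Fin nS) → Fin (ℓ s) → Bool) → Bool → Bool,
          ∀ x : Fin n → Bool, D (fun s => E s x) (x i) = x j

/-- Pairwise-XOR achievability. Given `Nc` pairwise-disjoint
message-connected leaf SCCs of the information-flow digraph `A` and `Nt`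
connecting trees (pairwise disjoint and disjoint from the SCCs; each consisting
of non-leaf vertices, with no arc of `A` leaving it, and connected in the message
graph `U` using only internal vertices), there is a valid multi-sender index code
of total length `V_out(G) − (Nc + Nt)`. -/
theorem pairwise_xor_achievability {n nS Nc Nt : ℕ}
    (A : Fin n → Fin n → Prop) (M : Fin nS → Set (Fin n))
    (hcov : ∀ i, ∃ s, i ∈ M s)
    (U : Fin n → Fin n → Prop)
    (hU : ∀ i j, U i j ↔ i ≠ j ∧ ∃ s, i ∈ M s ∧ j ∈ M s)
    (Cs : Fin Nc → Set (Fin n)) (Ts : Fin Nt → Set (Fin n))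
    (hCs : ∀ c, IsLeafSCC A (Cs c) ∧
      ∀ a ∈ Cs c, ∀ b ∈ Cs c,
        Relation.ReflTransGen (fun i j => U i j ∧ i ∈ Cs c ∧ j ∈ Cs c) a b)
    (hTs : ∀ t, (Ts t).Nonempty ∧ (∀ i ∈ Ts t, ¬ IsLeaf A i) ∧
      (∀ i ∈ Ts t, ∀ j, A i j → j ∈ Ts t) ∧
      ∀ a ∈ Ts t, ∀ b ∈ Ts t,
        Relation.ReflTransGen (fun i j => U i j ∧ i ∈ Ts t ∧ j ∈ Ts t) a b)
    (hdisjC : ∀ c c', c ≠ c' → Disjoint (Cs c) (Cs c'))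
    (hdisjT : ∀ t t', t ≠ t' → Disjoint (Ts t) (Ts t'))
    (hdisjCT : ∀ c t, Disjoint (Cs c) (Ts t)) :
    Achievable A M ({v : Fin n | ¬ IsLeaf A v}.ncard - (Nc + Nt)) := by
  classical
  -- Unified family of components: leaf SCCs and connecting trees
  let S : (Fin Nc ⊕ Fin Nt) → Set (Fin n) := Sum.elim Cs Ts
  have hne : ∀ k, (S k).Nonempty := by
    rintro (c | t)
    · exact ((hCs c).1.1).1
    · exact (hTs t).1
  have hcl : ∀ k, ∀ a ∈ S k, ∀ b, A a b → b ∈ S k := by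
    rintro (c | t) a ha b hab
    · exact (hCs c).1.2.2 a ha b hab
    · exact (hTs t).2.2.1 a ha b hab
  have hconn : ∀ k, ∀ a ∈ S k, ∀ b ∈ S k,
      Relation.ReflTransGen (fun i j => U i j ∧ i ∈ S k ∧ j ∈ S k) a b := by
    rintro (c | t) a ha b hb
    · exact (hCs c).2 a ha b hb
    · exact (hTs t).2.2.2 a ha b hb
  have hnlS : ∀ k, ∀ v ∈ S k, ¬ IsLeaf A v := by
    rintro (c | t) v hv
    · obtain ⟨⟨⟨hne', hrt, hmax⟩, ⟨i0, hi0, j0, hj0, hij⟩, hclosed⟩, _⟩ := hCs c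
      have : ∃ w ∈ Cs c, w ≠ v := by
        by_cases h : v = i0
        · exact ⟨j0, hj0, fun hh => hij (h ▸ hh.symm)⟩
        · exact ⟨i0, hi0, fun hh => h hh.symm⟩
      obtain ⟨w, hw, hwv⟩ := this
      have hrtg : Relation.ReflTransGen A v w := hrt v hv w hw
      rw [Relation.reflTransGen_iff_eq_or_transGen] at hrtg
      rcases hrtg with h | h
      · exact absurd h hwv
      · rw [Relation.TransGen.head'_iff] at h
        obtain ⟨b, hb, -⟩ := h
        exact fun hleaf => hleaf b hb
    · exact (hTs t).2.1 v hv
  have huniq : ∀ k k' (v : Fin n), v ∈ S k → v ∈ S k' → k = k' := by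
    intro k k' v hk hk'
    by_contra hkk
    have hdisj : Disjoint (S k) (S k') := by
      rcases k with c | t <;> rcases k' with c' | t'
      · exact hdisjC c c' (fun h => hkk (congrArg Sum.inl h))
      · exact hdisjCT c t'
      · exact (hdisjCT c' t).symm
      · exact hdisjT t t' (fun h => hkk (congrArg Sum.inr h))
    exact (Set.disjoint_left.mp hdisj hk) hk'
  -- roots
  let root : (Fin Nc ⊕ Fin Nt) → Fin n := fun k => (hne k).choose
  have hroot : ∀ k, root k ∈ S k := fun k => (hne k).choose_spec
  have hrootinj : Function.Injective root := by
    intro k k' h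
    exact huniq k k' (root k) (hroot k) (h ▸ hroot k')
  -- message-graph relation restricted to a component
  let RR : (Fin Nc ⊕ Fin Nt) → Fin n → Fin n → Prop :=
    fun k a b => U a b ∧ a ∈ S k ∧ b ∈ S k
  have hreach : ∀ k, ∀ v ∈ S k, ∃ m, PXReach (RR k) (root k) m v :=
    fun k v hv => pxreach_of_rtg (hconn k v hv (root k) (hroot k))
  -- parent map
  let pa : Fin n → Fin n := fun v =>
    if h : ∃ k, v ∈ S k then PXPar (RR h.choose) (root h.choose) v else v
  have hpaeq : ∀ k (v : Fin n), v ∈ S k → pa v = PXPar (RR k) (root k) v := by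
    intro k v hv
    have hex : ∃ k, v ∈ S k := ⟨k, hv⟩
    have h1 : pa v = PXPar (RR hex.choose) (root hex.choose) v := dif_pos hex
    rwa [huniq hex.choose k v hex.choose_spec hv] at h1
  have hpanot : ∀ v, (¬ ∃ k, v ∈ S k) → pa v = v := fun v h => dif_neg h
  have hpaspec : ∀ k (v : Fin n), v ∈ S k → v ≠ root k →
      U v (pa v) ∧ pa v ∈ S k := by
    intro k v hv hvr
    rw [hpaeq k v hv]
    obtain ⟨h1, -, -⟩ := pxpar_spec (hreach k v hv) hvr
    exact ⟨h1.1, h1.2.2⟩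
  -- the finsets
  let NLs : Finset (Fin n) := Finset.univ.filter (fun v => ¬ IsLeaf A v)
  let Rts : Finset (Fin n) := Finset.univ.image root
  let T : Finset (Fin n) := NLs \ Rts
  have hTmem : ∀ v : Fin n, v ∈ T ↔ (¬ IsLeaf A v ∧ ∀ k, v ≠ root k) := by
    intro v
    simp only [T, NLs, Rts, Finset.mem_sdiff, Finset.mem_filter, Finset.mem_univ,
      true_and, Finset.mem_image, not_exists]
    tauto
  have hST : ∀ k, ∀ v ∈ S k, v ≠ root k → v ∈ T := by
    intro k v hv hvr
    rw [hTmem]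
    refine ⟨hnlS k v hv, fun k' hk' => ?_⟩
    have hv' : v ∈ S k' := hk' ▸ hroot k'
    exact hvr ((huniq k k' v hv hv') ▸ hk')
  -- sender assignment and bit functions
  let σ : Fin n → Fin nS := fun v =>
    if h : ∃ s, v ∈ M s ∧ pa v ∈ M s then h.choose else (hcov v).choose
  have hσ : ∀ v ∈ T, v ∈ M (σ v) ∧ pa v ∈ M (σ v) := by
    intro v hv
    have hex : ∃ s, v ∈ M s ∧ pa v ∈ M s := by
      by_cases hin : ∃ k, v ∈ S k
      · obtain ⟨k, hk⟩ := hin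
        have hvr : v ≠ root k := ((hTmem v).mp hv).2 k
        obtain ⟨hUv, -⟩ := hpaspec k v hk hvr
        exact ((hU v (pa v)).mp hUv).2
      · rw [hpanot v hin]
        obtain ⟨s, hs⟩ := hcov v
        exact ⟨s, hs, hs⟩
    have hσv : σ v = hex.choose := dif_pos hex
    rw [hσv]
    exact hex.choose_spec
  -- bit functions, fibers, lengths, encoder
  let β : Fin n → (Fin n → Bool) → Bool := fun v x =>
    if ∃ k, v ∈ S k then xor (x v) (x (pa v)) else x v
  have hβ : ∀ v x, β v x = if ∃ k, v ∈ S k then xor (x v) (x (pa v)) else x v :=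
    fun _ _ => rfl
  let F : Fin nS → Finset (Fin n) := fun s => T.filter (fun v => σ v = s)
  let ℓfun : Fin nS → ℕ := fun s => (F s).card
  let E : (s : Fin nS) → (Fin n → Bool) → Fin (ℓfun s) → Bool :=
    fun s x k => β ((F s).equivFin.symm k : Fin n) x
  have hEdef : ∀ s x k, E s x k = β ((F s).equivFin.symm k : Fin n) x :=
    fun _ _ _ => rfl
  refine ⟨ℓfun, ?_, E, ?_, ?_⟩
  · -- total length
    have h1 : T.card = ∑ s, ℓfun s :=
      Finset.card_eq_sum_card_fiberwise (f := σ) (t := Finset.univ)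
        (fun v _ => Finset.mem_univ _)
    have h2 : Rts ⊆ NLs := by
      intro v hv
      simp only [Rts, Finset.mem_image, Finset.mem_univ, true_and] at hv
      obtain ⟨k, hk⟩ := hv
      simp only [NLs, Finset.mem_filter, Finset.mem_univ, true_and]
      exact hk ▸ hnlS k (root k) (hroot k)
    have h3 : Rts.card = Nc + Nt := by
      rw [Finset.card_image_of_injective _ hrootinj, Finset.card_univ]
      simp
    have h4 : {v : Fin n | ¬ IsLeaf A v} = ↑NLs := by
      ext v
      simp [NLs]
    rw [← h1, h4, Set.ncard_coe_finset]
    show (NLs \ Rts).card = NLs.card - (Nc + Nt)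
    rw [Finset.card_sdiff_of_subset h2, h3]
  · -- encoder validity
    intro s x x' hxx'
    funext k
    have hvF : ((F s).equivFin.symm k : Fin n) ∈ F s := ((F s).equivFin.symm k).2
    set v : Fin n := ((F s).equivFin.symm k : Fin n) with hvdef
    simp only [F, Finset.mem_filter] at hvF
    obtain ⟨hvT, hvσ⟩ := hvF
    obtain ⟨h1, h2⟩ := hσ v hvT
    rw [hvσ] at h1 h2
    show β v x = β v x'
    by_cases hin : ∃ k, v ∈ S k
    · simp only [hβ]
      rw [if_pos hin, if_pos hin, hxx' _ h1, hxx' _ h2]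
    · simp only [hβ]
      rw [if_neg hin, if_neg hin, hxx' _ h1]
  · -- decodability
    intro j i hA
    refine ⟨fun y b => if h : ∃ x : Fin n → Bool,
        (fun s => E s x) = y ∧ x i = b then h.choose j else false, ?_⟩
    intro x
    have hex : ∃ x0 : Fin n → Bool,
        (fun s => E s x0) = (fun s => E s x) ∧ x0 i = x i := ⟨x, rfl, rfl⟩
    show (if h : ∃ x0 : Fin n → Bool,
        (fun s => E s x0) = (fun s => E s x) ∧ x0 i = x i then h.choose j
      else false) = x j
    rw [dif_pos hex]
    obtain ⟨hE, hxi⟩ := hex.choose_spec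
    set x' : Fin n → Bool := hex.choose with hx'def
    -- bits agree on T
    have hbit : ∀ v ∈ T, β v x' = β v x := by
      intro v hv
      have hvF : v ∈ F (σ v) := Finset.mem_filter.mpr ⟨hv, rfl⟩
      have h1 := congrFun (congrFun hE (σ v)) ((F (σ v)).equivFin ⟨v, hvF⟩)
      simpa only [hEdef, Equiv.symm_apply_apply] using h1
    let y : Fin n → Bool := fun v => xor (x' v) (x v)
    have hy0 : ∀ v ∈ T, (¬ ∃ k, v ∈ S k) → y v = false := by
      intro v hv hin
      have h1 := hbit v hv
      simp only [hβ] at h1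
      rw [if_neg hin, if_neg hin] at h1
      show xor (x' v) (x v) = false
      rw [h1]
      simp
    have hye : ∀ v ∈ T, (∃ k, v ∈ S k) → y v = y (pa v) := by
      intro v hv hin
      have h1 := hbit v hv
      simp only [hβ] at h1
      rw [if_pos hin, if_pos hin] at h1
      show xor (x' v) (x v) = xor (x' (pa v)) (x (pa v))
      cases hb1 : x' v <;> cases hb2 : x v <;> cases hb3 : x' (pa v) <;>
          cases hb4 : x (pa v) <;>
        rw [hb1, hb2, hb3, hb4] at h1 <;> revert h1 <;> decide
    have hcompy : ∀ k, ∀ v ∈ S k, y v = y (root k) := by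
      intro k v hv
      refine pxprop (R := RR k) (r := root k) ?_ v (hreach k v hv)
      intro w hw hwr
      have hwS : w ∈ S k := by
        obtain ⟨m, hm⟩ := hw
        cases m with
        | zero => exact absurd hm hwr
        | succ m =>
          obtain ⟨u, hu, -⟩ := hm
          exact hu.2.1
      have hwT : w ∈ T := hST k w hwS hwr
      rw [← hpaeq k w hwS]
      exact hye w hwT ⟨k, hwS⟩
    have hyi : y i = false := by
      show xor (x' i) (x i) = false
      rw [hxi]
      simp
    have hgoal : y j = false → x' j = x j := by
      intro h
      have : xor (x' j) (x j) = false := h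
      cases hb1 : x' j <;> cases hb2 : x j <;> rw [hb1, hb2] at this <;>
        revert this <;> decide
    apply hgoal
    by_cases hin : ∃ k, j ∈ S k
    · obtain ⟨k, hk⟩ := hin
      have hik : i ∈ S k := hcl k j hk i hA
      have h1 : y j = y (root k) := hcompy k j hk
      have h2 : y i = y (root k) := hcompy k i hik
      rw [h1, ← h2, hyi]
    · have hjT : j ∈ T := by
        rw [hTmem]
        exact ⟨fun hleaf => hleaf i hA, fun k hk => hin ⟨k, hk ▸ hroot k⟩⟩
      exact hy0 j hjT hin
end

section
/- Adding an arc from a leaf SCC to a vertex outside it cannot increase the number of leaf SCCs: let G' be obtained from finite digraph G by adding one arc (v → u) where v belongs to a leaf SCC S of G and u ∉ S. Then the number of leaf SCCs of G' is at most the number of leaf SCCs of G. -/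
lemma scc_unique {V : Type*} {A : V → V → Prop} {S T : Set V}
    (hS : IsSCC A S) (hT : IsSCC A T) {x : V} (hxS : x ∈ S) (hxT : x ∈ T) : S = T := by
  obtain ⟨-, hSc, hSm⟩ := hS
  obtain ⟨-, hTc, hTm⟩ := hT
  ext w
  constructor
  · intro hw; exact hTm w ⟨x, hxT, hSc x hxS w hw, hSc w hw x hxS⟩
  · intro hw; exact hSm w ⟨x, hxS, hTc x hxT w hw, hTc w hw x hxT⟩

lemma closed_reach {V : Type*} {A : V → V → Prop} {v u : V} {T : Set V}
    (hclosed : ∀ i ∈ T, ∀ j, (A i j ∨ (i = v ∧ j = u)) → j ∈ T) (hvT : v ∉ T)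
    {i j : V} (hi : i ∈ T)
    (hij : Relation.ReflTransGen (fun a b => A a b ∨ (a = v ∧ b = u)) i j) :
    j ∈ T ∧ Relation.ReflTransGen A i j := by
  induction hij with
  | refl => exact ⟨hi, .refl⟩
  | tail h hbc ih =>
    obtain ⟨hbT, hpath⟩ := ih
    rcases hbc with h' | ⟨rfl, rfl⟩
    · exact ⟨hclosed _ hbT _ (Or.inl h'), hpath.tail h'⟩
    · exact absurd hbT hvT

/-- Adding a single arc from a vertex `v` of a leaf SCC `S` to a
vertex `u` outside `S` cannot increase the number of leaf SCCs. -/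
theorem add_arc_leafSCC_count {V : Type*} [Fintype V] (A : V → V → Prop)
    (S : Set V) (hS : IsLeafSCC A S) (v : V) (hv : v ∈ S) (u : V) (hu : u ∉ S) :
    {T : Set V | IsLeafSCC (fun a b => A a b ∨ (a = v ∧ b = u)) T}.ncard ≤
      {T : Set V | IsLeafSCC A T}.ncard := by
  classical
  apply Set.ncard_le_ncard_of_injOn (fun T => if v ∈ T then S else T)
  · intro T hT
    by_cases hvT : v ∈ T
    · simpa [hvT] using hS
    · simp only [hvT, if_false, Set.mem_setOf_eq] at hT ⊢
      obtain ⟨⟨hne, hconn, hmax⟩, htwo, hclosed⟩ := hT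
      refine ⟨⟨hne, ?_, ?_⟩, htwo, ?_⟩
      · intro i hi j hj
        exact (closed_reach hclosed hvT hi (hconn i hi j hj)).2
      · rintro w ⟨i, hi, h1, h2⟩
        exact hmax w ⟨i, hi, Relation.ReflTransGen.mono (fun a b h => Or.inl h) _ _ h1,
          Relation.ReflTransGen.mono (fun a b h => Or.inl h) _ _ h2⟩
      · intro i hi j hij
        exact hclosed i hi j (Or.inl hij)
  · intro T1 h1 T2 h2 heq
    simp only [Set.mem_setOf_eq] at h1 h2
    dsimp only at heq
    by_cases hv1 : v ∈ T1 <;> by_cases hv2 : v ∈ T2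
    · exact scc_unique h1.1 h2.1 hv1 hv2
    · rw [if_pos hv1, if_neg hv2] at heq
      exact absurd (heq ▸ hv) hv2
    · rw [if_neg hv1, if_pos hv2] at heq
      exact absurd (heq ▸ hv) hv1
    · rwa [if_neg hv1, if_neg hv2] at heq
end
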